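/- Let K be a field, D = K[x,y], and let f, g ∈ D be coprime polynomials with zero constant term. Then for all sufficiently large N, the fractions x/(fg)^N and y/(fg)^N lie in R(D). -/

import Mathlib

noncomputable def recip (D : Type*) [CommRing D] [IsDomain D] : Subring (FractionRing D) :=
  Subring.closure {x | ∃ d : D, d ≠ 0 ∧ x = (algebraMap D (FractionRing D) d)⁻¹}

open Polynomial in
/-- If a domain `E` has a `K`-point `ev` and `t ∈ E` maps to `0`, and `t ≠ 0`,
then no nonzero one-variable polynomial over `K` vanishes at `t`. -/
lemma aux_eval₂_ne_zero {K E : Type*} [Field K] [CommRing E] [IsDomain E]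
    (χ : K →+* E) (ev : E →+* K) (hcomp : ∀ c, ev (χ c) = c)
    {t : E} (ht0 : ev t = 0) (htne : t ≠ 0) :
    ∀ c : K[X], c ≠ 0 → eval₂ χ t c ≠ 0 := by
  suffices H : ∀ (n : ℕ) (c : K[X]), c.natDegree ≤ n → c ≠ 0 → eval₂ χ t c ≠ 0 by
    exact fun c hc => H c.natDegree c le_rfl hc
  intro n
  induction n with
  | zero =>
    intro c hdeg hc heval
    have hcC : c = C (c.coeff 0) := eq_C_of_natDegree_le_zero hdeg
    rw [hcC, eval₂_C] at heval
    have : c.coeff 0 = 0 := by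
      have := congrArg ev heval
      rw [hcomp, map_zero] at this
      exact this
    exact hc (by rw [hcC, this, map_zero])
  | succ n ih =>
    intro c hdeg hc heval
    have h0 : c.coeff 0 = 0 := by
      have h1 := congrArg ev heval
      rw [hom_eval₂, map_zero, ht0, eval₂_at_zero, RingHom.comp_apply, hcomp] at h1
      exact h1
    have hX : X * c.divX = c := by
      have := X_mul_divX_add c
      rwa [h0, map_zero, add_zero] at this
    have hd : c.divX ≠ 0 := fun h => hc (by rw [← hX, h, mul_zero])
    rw [← hX, eval₂_mul, eval₂_X] at heval
    rcases mul_eq_zero.mp heval with h | h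
    · exact htne h
    · refine ih c.divX ?_ hd h
      have hne : c.natDegree ≠ 0 := fun hz =>
        hc (by rw [eq_C_of_natDegree_eq_zero hz, h0, map_zero])
      have := Polynomial.natDegree_divX_eq_natDegree_tsub_one (p := c)
      omega

open MvPolynomial in
lemma aux_exists_prime_factor {K : Type*} [Field K]
    (g : MvPolynomial (Fin 2) K) (hg : g ≠ 0) (h0 : constantCoeff g = 0) :
    ∃ π : MvPolynomial (Fin 2) K, Prime π ∧ π ∣ g ∧ constantCoeff π = 0 := by
  have H : ∀ a : MvPolynomial (Fin 2) K, a ≠ 0 → constantCoeff a = 0 →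
      ∃ π, Prime π ∧ π ∣ a ∧ constantCoeff π = 0 := by
    intro a
    induction a using UniqueFactorizationMonoid.induction_on_prime with
    | h₁ => exact fun h _ => absurd rfl h
    | h₂ x hx =>
      intro _ hx0
      exact absurd (hx.map constantCoeff) (by rw [hx0]; exact not_isUnit_zero)
    | h₃ a p ha hp ih =>
      intro hpa h0
      rw [map_mul] at h0
      rcases mul_eq_zero.mp h0 with h | h
      · exact ⟨p, hp, dvd_mul_right _ _, h⟩
      · obtain ⟨π, hπ, hdvd, hπ0⟩ := ih (fun h => hpa (by rw [h, mul_zero])) h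
        exact ⟨π, hπ, hdvd.mul_left _, hπ0⟩
  exact H g hg h0

open Polynomial MvPolynomial in
/-- Coprime `f, g` vanishing at the origin are algebraically independent. -/
lemma aux_no_relation {K : Type*} [Field K]
    (f g : MvPolynomial (Fin 2) K)
    (hcop : ∀ d : MvPolynomial (Fin 2) K, d ∣ f → d ∣ g → IsUnit d)
    (hf0 : constantCoeff f = 0) (hg0 : constantCoeff g = 0)
    (hg : g ≠ 0)
    (hπex : ∃ π : MvPolynomial (Fin 2) K, Prime π ∧ π ∣ g ∧ constantCoeff π = 0) :
    ∀ Q : Polynomial (Polynomial K),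
      Polynomial.eval₂ (Polynomial.aeval f).toRingHom g Q = 0 → Q = 0 := by
  classical
  obtain ⟨π, hπ, hπg, hπ0⟩ := hπex
  set I : Ideal (MvPolynomial (Fin 2) K) := Ideal.span {π} with hI
  haveI hIP : I.IsPrime := (Ideal.span_singleton_prime hπ.ne_zero).mpr hπ
  let ψ : MvPolynomial (Fin 2) K →+* MvPolynomial (Fin 2) K ⧸ I := Ideal.Quotient.mk I
  have hker : ∀ a ∈ I, constantCoeff a = 0 := by
    intro a ha
    rw [hI, Ideal.mem_span_singleton] at ha
    obtain ⟨c, rfl⟩ := ha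
    rw [map_mul, hπ0, zero_mul]
  let ev : MvPolynomial (Fin 2) K ⧸ I →+* K := Ideal.Quotient.lift I constantCoeff hker
  have hψg : ψ g = 0 := by
    rw [Ideal.Quotient.eq_zero_iff_mem, hI, Ideal.mem_span_singleton]
    exact hπg
  have hψf : ψ f ≠ 0 := by
    rw [Ne, Ideal.Quotient.eq_zero_iff_mem, hI, Ideal.mem_span_singleton]
    intro hd
    exact hπ.not_unit (hcop π hd hπg)
  have hevf : ev (ψ f) = 0 := by
    show Ideal.Quotient.lift I constantCoeff hker (Ideal.Quotient.mk I f) = 0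
    rw [Ideal.Quotient.lift_mk]; exact hf0
  set χ : K →+* MvPolynomial (Fin 2) K ⧸ I := ψ.comp (algebraMap K (MvPolynomial (Fin 2) K)) with hχ
  have hcomp : ∀ c : K, ev (χ c) = c := by
    intro c
    show Ideal.Quotient.lift I constantCoeff hker
      (Ideal.Quotient.mk I (algebraMap K (MvPolynomial (Fin 2) K) c)) = c
    rw [Ideal.Quotient.lift_mk, MvPolynomial.algebraMap_eq, MvPolynomial.constantCoeff_C]
  -- main induction
  suffices H : ∀ (n : ℕ) (Q : Polynomial (Polynomial K)), Q.natDegree ≤ n →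
      Polynomial.eval₂ (Polynomial.aeval f).toRingHom g Q = 0 → Q = 0 by
    exact fun Q => H Q.natDegree Q le_rfl
  have key : ∀ Q : Polynomial (Polynomial K),
      Polynomial.eval₂ (Polynomial.aeval f).toRingHom g Q = 0 → Q.coeff 0 = 0 := by
    intro Q hQ
    have h1 := congrArg ψ hQ
    rw [Polynomial.hom_eval₂, map_zero, hψg, Polynomial.eval₂_at_zero,
      RingHom.comp_apply] at h1
    -- h1 : ψ ((Polynomial.aeval f) (Q.coeff 0)) = 0
    simp only [AlgHom.toRingHom_eq_coe, RingHom.coe_coe] at h1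
    rw [Polynomial.aeval_def] at h1
    have h2 : Polynomial.eval₂ χ (ψ f) (Q.coeff 0) = 0 := by
      rw [hχ, ← Polynomial.hom_eval₂]
      exact h1
    by_contra hne
    exact aux_eval₂_ne_zero χ ev hcomp hevf hψf (Q.coeff 0) hne h2
  intro n
  induction n with
  | zero =>
    intro Q hdeg hQ
    rw [Polynomial.eq_C_of_natDegree_le_zero hdeg, key Q hQ, map_zero]
  | succ n ih =>
    intro Q hdeg hQ
    have h0 := key Q hQ
    have hX : Polynomial.X * Q.divX = Q := by
      have := Polynomial.X_mul_divX_add Q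
      rwa [h0, map_zero, add_zero] at this
    rw [← hX, Polynomial.eval₂_mul, Polynomial.eval₂_X] at hQ
    rcases mul_eq_zero.mp hQ with h | h
    · exact absurd h hg
    · have : Q.divX = 0 := by
        refine ih Q.divX ?_ h
        have := Polynomial.natDegree_divX_le (p := Q)
        have := Polynomial.natDegree_divX_eq_natDegree_tsub_one (p := Q)
        omega
      rw [← hX, this, mul_zero]

open Polynomial MvPolynomial in
lemma aux_X0_dvd {K : Type*} [Field K] (a : MvPolynomial (Fin 2) K)
    (h : MvPolynomial.aeval ![(0 : Polynomial K), Polynomial.X] a = 0) :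
    MvPolynomial.X 0 ∣ a := by
  classical
  set ρ : MvPolynomial (Fin 2) K →ₐ[K] Polynomial K :=
    MvPolynomial.aeval ![(0 : Polynomial K), Polynomial.X] with hρ
  set σ : Polynomial K →ₐ[K] MvPolynomial (Fin 2) K :=
    Polynomial.aeval (MvPolynomial.X 1) with hσ
  have claim : ∀ b : MvPolynomial (Fin 2) K, MvPolynomial.X 0 ∣ b - σ (ρ b) := by
    intro b
    induction b using MvPolynomial.induction_on with
    | C c => simp [hρ, hσ]
    | add p q hp hq =>
      rw [map_add, map_add]
      have e : p + q - (σ (ρ p) + σ (ρ q)) = (p - σ (ρ p)) + (q - σ (ρ q)) := by ring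
      rw [e]; exact dvd_add hp hq
    | mul_X p i hp =>
      fin_cases i
      · simp only [Fin.zero_eta, Fin.mk_one, map_mul, hρ, MvPolynomial.aeval_X,
          Matrix.cons_val_zero, mul_zero, map_zero, sub_zero]
        exact Dvd.intro_left p rfl
      · simp only [Fin.zero_eta, Fin.mk_one, map_mul, hρ, hσ, MvPolynomial.aeval_X,
          Matrix.cons_val_one, Matrix.head_cons, Polynomial.aeval_X, Matrix.cons_val_zero]
        have e : p * MvPolynomial.X 1 -
            (Polynomial.aeval (MvPolynomial.X 1 : MvPolynomial (Fin 2) K))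
              ((MvPolynomial.aeval ![(0 : Polynomial K), Polynomial.X]) p) * MvPolynomial.X 1
            = (p - (Polynomial.aeval (MvPolynomial.X 1 : MvPolynomial (Fin 2) K))
              ((MvPolynomial.aeval ![(0 : Polynomial K), Polynomial.X]) p)) * MvPolynomial.X 1 := by
          ring
        rw [e]
        refine Dvd.dvd.mul_right ?_ _
        have := hp
        rw [hρ, hσ] at this
        exact this
  have := claim a
  rwa [hρ, h, map_zero, sub_zero] at this

open Polynomial MvPolynomial in
lemma aux_X1_dvd {K : Type*} [Field K] (a : MvPolynomial (Fin 2) K)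
    (h : MvPolynomial.aeval ![Polynomial.X, (0 : Polynomial K)] a = 0) :
    MvPolynomial.X 1 ∣ a := by
  classical
  set ρ : MvPolynomial (Fin 2) K →ₐ[K] Polynomial K :=
    MvPolynomial.aeval ![Polynomial.X, (0 : Polynomial K)] with hρ
  set σ : Polynomial K →ₐ[K] MvPolynomial (Fin 2) K :=
    Polynomial.aeval (MvPolynomial.X 0) with hσ
  have claim : ∀ b : MvPolynomial (Fin 2) K, MvPolynomial.X 1 ∣ b - σ (ρ b) := by
    intro b
    induction b using MvPolynomial.induction_on with
    | C c => simp [hρ, hσ]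
    | add p q hp hq =>
      rw [map_add, map_add]
      have e : p + q - (σ (ρ p) + σ (ρ q)) = (p - σ (ρ p)) + (q - σ (ρ q)) := by ring
      rw [e]; exact dvd_add hp hq
    | mul_X p i hp =>
      fin_cases i
      · simp only [Fin.zero_eta, Fin.mk_one, map_mul, hρ, hσ, MvPolynomial.aeval_X,
          Matrix.cons_val_zero, Polynomial.aeval_X]
        have e : p * MvPolynomial.X 0 -
            (Polynomial.aeval (MvPolynomial.X 0 : MvPolynomial (Fin 2) K))
              ((MvPolynomial.aeval ![Polynomial.X, (0 : Polynomial K)]) p) * MvPolynomial.X 0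
            = (p - (Polynomial.aeval (MvPolynomial.X 0 : MvPolynomial (Fin 2) K))
              ((MvPolynomial.aeval ![Polynomial.X, (0 : Polynomial K)]) p)) * MvPolynomial.X 0 := by
          ring
        rw [e]
        refine Dvd.dvd.mul_right ?_ _
        have := hp
        rw [hρ, hσ] at this
        exact this
      · simp only [Fin.zero_eta, Fin.mk_one, map_mul, hρ, MvPolynomial.aeval_X,
          Matrix.cons_val_one, Matrix.head_cons, Matrix.cons_val_zero, mul_zero, map_zero, sub_zero]
        exact Dvd.intro_left p rfl
  have := claim a
  rwa [hρ, h, map_zero, sub_zero] at this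

open Polynomial in
lemma aux_exists_relation {K : Type*} [Field K] (p q : Polynomial K) :
    ∃ Q : Polynomial (Polynomial K), Q ≠ 0 ∧
      Polynomial.eval₂ (Polynomial.aeval p).toRingHom q Q = 0 := by
  classical
  set d := max p.natDegree q.natDegree + 1 with hd
  set n := 2 * d + 1 with hn
  set m := 2 * n * d + 1 with hm
  set v : Fin n × Fin n → Polynomial K :=
    fun ij => p ^ (ij.1 : ℕ) * q ^ (ij.2 : ℕ) with hv
  have hpd : p.natDegree ≤ d := by
    have := le_max_left p.natDegree q.natDegree; omega
  have hqd : q.natDegree ≤ d := by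
    have := le_max_right p.natDegree q.natDegree; omega
  have hmem : ∀ ij, v ij ∈ degreeLT K m := by
    intro ij
    rw [Polynomial.mem_degreeLT]
    refine lt_of_le_of_lt Polynomial.degree_le_natDegree ?_
    have h2 : (v ij).natDegree < m := by
      have h1 : (v ij).natDegree ≤ (ij.1 : ℕ) * p.natDegree + (ij.2 : ℕ) * q.natDegree :=
        le_trans Polynomial.natDegree_mul_le
          (add_le_add Polynomial.natDegree_pow_le Polynomial.natDegree_pow_le)
      have hi : (ij.1 : ℕ) ≤ n := le_of_lt ij.1.isLt
      have hj : (ij.2 : ℕ) ≤ n := le_of_lt ij.2.isLt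
      have t1 : (ij.1 : ℕ) * p.natDegree ≤ n * d := Nat.mul_le_mul hi hpd
      have t2 : (ij.2 : ℕ) * q.natDegree ≤ n * d := Nat.mul_le_mul hj hqd
      have e : m = n * d + n * d + 1 := by rw [hm]; ring
      omega
    exact_mod_cast h2
  have hnotli : ¬ LinearIndependent K v := by
    intro hli
    let w : Fin n × Fin n → degreeLT K m := fun ij => ⟨v ij, hmem ij⟩
    have hw : LinearIndependent K w := by
      refine LinearIndependent.of_comp (degreeLT K m).subtype ?_
      exact hli
    haveI : Module.Finite K (degreeLT K m) := Module.Finite.equiv (degreeLTEquiv K m).symm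
    have hcard := hw.fintype_card_le_finrank
    rw [Fintype.card_prod, Fintype.card_fin] at hcard
    have hfr : Module.finrank K (degreeLT K m) = m := by
      rw [LinearEquiv.finrank_eq (degreeLTEquiv K m), Module.finrank_fin_fun]
    rw [hfr] at hcard
    have e1 : n * n = 2 * n * d + n := by rw [hn]; ring
    omega
  obtain ⟨c, hc0, i₀, hci⟩ := Fintype.not_linearIndependent_iff.mp hnotli
  -- build the witness polynomial
  set A : Fin n → Polynomial K :=
    fun j => ∑ i : Fin n, Polynomial.C (c (i, j)) * Polynomial.X ^ (i : ℕ) with hA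
  set Q : Polynomial (Polynomial K) :=
    ∑ j : Fin n, Polynomial.C (A j) * Polynomial.X ^ (j : ℕ) with hQ
  have hAcoeff : ∀ (j : Fin n) (i : Fin n), (A j).coeff (i : ℕ) = c (i, j) := by
    intro j i
    rw [hA]
    rw [Polynomial.finset_sum_coeff]
    rw [Finset.sum_eq_single i]
    · simp
    · intro b _ hb
      have : (i : ℕ) ≠ (b : ℕ) := fun h => hb (Fin.ext h.symm)
      simp [Polynomial.coeff_X_pow, this]
    · intro h; exact absurd (Finset.mem_univ i) h
  have hQcoeff : ∀ j : Fin n, Q.coeff (j : ℕ) = A j := by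
    intro j
    rw [hQ, Polynomial.finset_sum_coeff]
    rw [Finset.sum_eq_single j]
    · simp
    · intro b _ hb
      have : (j : ℕ) ≠ (b : ℕ) := fun h => hb (Fin.ext h.symm)
      simp [Polynomial.coeff_X_pow, this]
    · intro h; exact absurd (Finset.mem_univ j) h
  refine ⟨Q, ?_, ?_⟩
  · intro h
    have := hAcoeff i₀.2 i₀.1
    rw [← hQcoeff i₀.2, h] at this
    simp at this
    exact hci this.symm
  · rw [hQ, Polynomial.eval₂_finset_sum]
    have step : ∀ j : Fin n,
        Polynomial.eval₂ (Polynomial.aeval p).toRingHom q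
          (Polynomial.C (A j) * Polynomial.X ^ (j : ℕ))
        = ∑ i : Fin n, c (i, j) • v (i, j) := by
      intro j
      rw [Polynomial.eval₂_mul, Polynomial.eval₂_C, Polynomial.eval₂_X_pow]
      simp only [AlgHom.toRingHom_eq_coe, RingHom.coe_coe]
      rw [hA, map_sum, Finset.sum_mul]
      refine Finset.sum_congr rfl ?_
      intro i _
      rw [map_mul, map_pow, Polynomial.aeval_C, Polynomial.aeval_X]
      rw [hv, Algebra.smul_def]
      ring
    rw [Finset.sum_congr rfl (fun j _ => step j)]
    rw [← Fintype.sum_prod_type_right (f := fun ij : Fin n × Fin n => c ij • v ij)]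
    exact hc0

set_option maxHeartbeats 1000000
set_option synthInstance.maxHeartbeats 200000

lemma aux_inv_mem_recip {D : Type*} [CommRing D] [IsDomain D] {d : D} (hd : d ≠ 0) :
    (algebraMap D (FractionRing D) d)⁻¹ ∈ recip D :=
  Subring.subset_closure ⟨d, hd, rfl⟩

section Good

variable {K : Type*} [Field K]

local notation "φ" => algebraMap (MvPolynomial (Fin 2) K) (FractionRing (MvPolynomial (Fin 2) K))

/-- `a/(fg)^N` is a sum of reciprocals for some `N`. -/
def IsGood (f g a : MvPolynomial (Fin 2) K) : Prop :=
  ∃ N : ℕ, φ a / φ ((f * g) ^ N) ∈ recip (MvPolynomial (Fin 2) K)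

variable {f g : MvPolynomial (Fin 2) K}

lemma aux_phi_ne_zero {a : MvPolynomial (Fin 2) K} (ha : a ≠ 0) : φ a ≠ 0 := by
  rw [Ne, IsFractionRing.to_map_eq_zero_iff]
  exact ha

lemma aux_phi_C_mem (c : K) : φ (MvPolynomial.C c) ∈ recip (MvPolynomial (Fin 2) K) := by
  rcases eq_or_ne c 0 with rfl | hc
  · rw [map_zero, map_zero]; exact zero_mem _
  · have h1 : φ (MvPolynomial.C c) * φ (MvPolynomial.C c⁻¹) = 1 := by
      rw [← map_mul, ← map_mul, mul_inv_cancel₀ hc, map_one, map_one]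
    have h2 : φ (MvPolynomial.C c) = (φ (MvPolynomial.C c⁻¹))⁻¹ :=
      eq_inv_of_mul_eq_one_left h1
    rw [h2]
    refine aux_inv_mem_recip ?_
    intro h
    rw [h, map_zero, mul_zero] at h1
    exact zero_ne_one h1

namespace IsGood

lemma mono (hf : f ≠ 0) (hg : g ≠ 0) {a : MvPolynomial (Fin 2) K} {N M : ℕ}
    (hNM : N ≤ M) (h : φ a / φ ((f * g) ^ N) ∈ recip (MvPolynomial (Fin 2) K)) :
    φ a / φ ((f * g) ^ M) ∈ recip (MvPolynomial (Fin 2) K) := by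
  have hfg : f * g ≠ 0 := mul_ne_zero hf hg
  rw [show M = N + (M - N) by omega, pow_add, map_mul, ← div_div, div_eq_mul_inv]
  exact mul_mem h (aux_inv_mem_recip (pow_ne_zero _ hfg))

lemma add (hf : f ≠ 0) (hg : g ≠ 0) {a b : MvPolynomial (Fin 2) K}
    (ha : IsGood f g a) (hb : IsGood f g b) : IsGood f g (a + b) := by
  obtain ⟨N, hN⟩ := ha
  obtain ⟨M, hM⟩ := hb
  refine ⟨max N M, ?_⟩
  rw [map_add, add_div]
  exact add_mem (mono hf hg (le_max_left _ _) hN) (mono hf hg (le_max_right _ _) hM)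

lemma mul {a b : MvPolynomial (Fin 2) K}
    (ha : IsGood f g a) (hb : IsGood f g b) : IsGood f g (a * b) := by
  obtain ⟨N, hN⟩ := ha
  obtain ⟨M, hM⟩ := hb
  refine ⟨N + M, ?_⟩
  rw [map_mul, pow_add, map_mul, ← div_mul_div_comm]
  exact mul_mem hN hM

lemma C (c : K) : IsGood f g (MvPolynomial.C c) :=
  ⟨0, by rw [pow_zero, map_one, div_one]; exact aux_phi_C_mem c⟩

lemma one : IsGood f g 1 := by
  have := C (f := f) (g := g) (1 : K)
  rwa [map_one] at this

lemma left (hf : f ≠ 0) (hg : g ≠ 0) : IsGood f g f := by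
  refine ⟨1, ?_⟩
  rw [pow_one, map_mul, div_mul_cancel_left₀ (aux_phi_ne_zero hf)]
  exact aux_inv_mem_recip hg

lemma right (hf : f ≠ 0) (hg : g ≠ 0) : IsGood f g g := by
  refine ⟨1, ?_⟩
  rw [pow_one, map_mul, mul_comm (φ f) (φ g), div_mul_cancel_left₀ (aux_phi_ne_zero hg)]
  exact aux_inv_mem_recip hf

lemma factor {a b c : MvPolynomial (Fin 2) K} (ha : a ≠ 0) (habc : a = b * c)
    (h : IsGood f g a) : IsGood f g b := by
  obtain ⟨N, hN⟩ := h
  refine ⟨N, ?_⟩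
  have hc : c ≠ 0 := by rintro rfl; rw [mul_zero] at habc; exact ha habc
  have : φ b / φ ((f * g) ^ N) = φ a / φ ((f * g) ^ N) * (φ c)⁻¹ := by
    rw [habc, map_mul, div_mul_eq_mul_div, mul_assoc,
      mul_inv_cancel₀ (aux_phi_ne_zero hc), mul_one]
  rw [this]
  exact mul_mem hN (aux_inv_mem_recip hc)

lemma pow {a : MvPolynomial (Fin 2) K} (ha : IsGood f g a) :
    ∀ k : ℕ, IsGood f g (a ^ k)
  | 0 => by rw [pow_zero]; exact one
  | (k + 1) => by rw [pow_succ]; exact mul (pow ha k) ha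

end IsGood

open Polynomial in
lemma aux_good_eval₂ (hf : f ≠ 0) (hg : g ≠ 0) (Q : Polynomial (Polynomial K)) :
    IsGood f g (Polynomial.eval₂ (Polynomial.aeval f).toRingHom g Q) := by
  classical
  have haeval : ∀ c : Polynomial K, IsGood f g (Polynomial.aeval f c) := by
    intro c
    induction c using Polynomial.induction_on' with
    | add p q hp hq => rw [map_add]; exact IsGood.add hf hg hp hq
    | monomial k a =>
      rw [Polynomial.aeval_monomial]
      exact IsGood.mul (by rw [MvPolynomial.algebraMap_eq]; exact IsGood.C a)
        (IsGood.pow (IsGood.left hf hg) k)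
  induction Q using Polynomial.induction_on' with
  | add p q hp hq => rw [Polynomial.eval₂_add]; exact IsGood.add hf hg hp hq
  | monomial k a =>
    rw [Polynomial.eval₂_monomial]
    exact IsGood.mul (haeval a) (IsGood.pow (IsGood.right hf hg) k)

end Good


/-- Let `D = K[x,y]` and let `f, g ∈ D` be coprime polynomials (no
nonunit common factor) with zero constant term.  Then for all sufficiently large `N`,
`x/(fg)^N ∈ R(D)` and `y/(fg)^N ∈ R(D)`. -/
theorem stmt_15 (K : Type*) [Field K] (f g : MvPolynomial (Fin 2) K)
    (hcop : ∀ d : MvPolynomial (Fin 2) K, d ∣ f → d ∣ g → IsUnit d)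
    (hf0 : MvPolynomial.constantCoeff f = 0) (hg0 : MvPolynomial.constantCoeff g = 0) :
    ∃ N₀ : ℕ, ∀ N ≥ N₀,
      letI D := MvPolynomial (Fin 2) K
      letI φ := algebraMap D (FractionRing D)
      φ (MvPolynomial.X 0) / φ ((f * g) ^ N) ∈ recip D ∧
      φ (MvPolynomial.X 1) / φ ((f * g) ^ N) ∈ recip D := by
  classical
  have hf : f ≠ 0 := by
    intro h
    have hu : IsUnit g := hcop g (by rw [h]; exact dvd_zero g) dvd_rfl
    have := hu.map MvPolynomial.constantCoeff
    rw [hg0] at this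
    exact not_isUnit_zero this
  have hg : g ≠ 0 := by
    intro h
    have hu : IsUnit f := hcop f dvd_rfl (by rw [h]; exact dvd_zero f)
    have := hu.map MvPolynomial.constantCoeff
    rw [hf0] at this
    exact not_isUnit_zero this
  have hπex := aux_exists_prime_factor g hg hg0
  -- the first variable
  have goodX0 : IsGood f g (MvPolynomial.X 0) := by
    set ρalg : MvPolynomial (Fin 2) K →ₐ[K] Polynomial K :=
      MvPolynomial.aeval (R := K) ![(0 : Polynomial K), Polynomial.X] with hρalg
    obtain ⟨Q, hQne, hQrel⟩ := aux_exists_relation (ρalg f) (ρalg g)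
    set a := Polynomial.eval₂ (Polynomial.aeval (R := K) f).toRingHom g Q with hadef
    have hane : a ≠ 0 := fun h => hQne (aux_no_relation f g hcop hf0 hg0 hg hπex Q h)
    have hcomp : ρalg.toRingHom.comp (Polynomial.aeval (R := K) f).toRingHom
        = (Polynomial.aeval (ρalg f)).toRingHom := by
      apply Polynomial.ringHom_ext
      · intro c
        simp [MvPolynomial.algebraMap_eq]
      · simp
    have hker : ρalg a = 0 := by
      have h1 : ρalg.toRingHom (Polynomial.eval₂ (Polynomial.aeval (R := K) f).toRingHom g Q)
          = Polynomial.eval₂ (ρalg.toRingHom.comp (Polynomial.aeval (R := K) f).toRingHom)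
              (ρalg.toRingHom g) Q := Polynomial.hom_eval₂ _ _ _ _
      rw [hcomp] at h1
      show ρalg.toRingHom a = 0
      rw [hadef, h1]
      exact hQrel
    obtain ⟨b, hb⟩ := aux_X0_dvd a hker
    exact IsGood.factor hane hb (aux_good_eval₂ hf hg Q)
  -- the second variable
  have goodX1 : IsGood f g (MvPolynomial.X 1) := by
    set ρalg : MvPolynomial (Fin 2) K →ₐ[K] Polynomial K :=
      MvPolynomial.aeval (R := K) ![Polynomial.X, (0 : Polynomial K)] with hρalg
    obtain ⟨Q, hQne, hQrel⟩ := aux_exists_relation (ρalg f) (ρalg g)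
    set a := Polynomial.eval₂ (Polynomial.aeval (R := K) f).toRingHom g Q with hadef
    have hane : a ≠ 0 := fun h => hQne (aux_no_relation f g hcop hf0 hg0 hg hπex Q h)
    have hcomp : ρalg.toRingHom.comp (Polynomial.aeval (R := K) f).toRingHom
        = (Polynomial.aeval (ρalg f)).toRingHom := by
      apply Polynomial.ringHom_ext
      · intro c
        simp [MvPolynomial.algebraMap_eq]
      · simp
    have hker : ρalg a = 0 := by
      have h1 : ρalg.toRingHom (Polynomial.eval₂ (Polynomial.aeval (R := K) f).toRingHom g Q)
          = Polynomial.eval₂ (ρalg.toRingHom.comp (Polynomial.aeval (R := K) f).toRingHom)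
              (ρalg.toRingHom g) Q := Polynomial.hom_eval₂ _ _ _ _
      rw [hcomp] at h1
      show ρalg.toRingHom a = 0
      rw [hadef, h1]
      exact hQrel
    obtain ⟨b, hb⟩ := aux_X1_dvd a hker
    exact IsGood.factor hane hb (aux_good_eval₂ hf hg Q)
  obtain ⟨N₁, h₁⟩ := goodX0
  obtain ⟨N₂, h₂⟩ := goodX1
  refine ⟨max N₁ N₂, fun N hN => ?_⟩
  exact ⟨IsGood.mono hf hg (le_trans (le_max_left _ _) hN) h₁,
    IsGood.mono hf hg (le_trans (le_max_right _ _) hN) h₂⟩
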